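/- Asymptotic auto-correlation under the renormalized coupling: fix L ≥ 2 and κ with |κ| < 1/2, and for each N > L set ε = κ/N and consider paths of length N. Then lim_{N→∞} N · Σ_{s ∈ {−1,+1}^N} s_{N−L+1} · s_N · W_ε(s) = 2κ · (1 + 2κ · H(κ)), where H(κ) = lim_{N→∞} m₂(N; κ/N)/N (this limit exists). -/

import Mathlib

open Filter

/-- The discrete stochastic process with memory: binomial transfer probabilities
with coupling `ε`. -/
noncomputable def P (ε : ℝ) : ℕ → ℤ → ℝ
  | 0, x => if x = 0 then 1 else 0
  | n + 1, x =>
      P ε n (x + 1) * (1 / 2 - ((x : ℝ) + 1) * ε) +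
      P ε n (x - 1) * (1 / 2 + ((x : ℝ) - 1) * ε)

/-- The second moment with coupling `ε`: `m₂(n; ε) = Σ_{x ∈ ℤ} x² · P(n, x; ε)`. -/
noncomputable def m2 (ε : ℝ) (n : ℕ) : ℝ := ∑' x : ℤ, (x : ℝ) ^ 2 * P ε n x

/-- A single step of a binary path: `+1` or `−1`. -/
def step (b : Bool) : ℤ := if b then 1 else -1

/-- The displacement after `k` steps: `x_k(s) = s_1 + ⋯ + s_k` (with `x_0(s) = 0`). -/
def pos {N : ℕ} (s : Fin N → Bool) (k : ℕ) : ℤ :=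
  ∑ j ∈ Finset.univ.filter (fun j : Fin N => (j : ℕ) < k), step (s j)

/-- The weight of a path: `W_ε(s) = Π_{k=0}^{N−1} (1/2 + x_k(s) · ε · s_{k+1})`. -/
noncomputable def W (ε : ℝ) {N : ℕ} (s : Fin N → Bool) : ℝ :=
  ∏ k : Fin N, (1 / 2 + (pos s (k : ℕ) : ℝ) * ε * (step (s k) : ℝ))

-- basic lemmas
lemma pos_eq_sum_ite {N : ℕ} (s : Fin N → Bool) (k : ℕ) :
    pos s k = ∑ j : Fin N, if (j : ℕ) < k then step (s j) else 0 := by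
  rw [pos, Finset.sum_filter]

lemma pos_snoc {n : ℕ} (s : Fin n → Bool) (b : Bool) (k : ℕ) :
    pos (Fin.snoc s b) k = pos s k + if n < k then step b else 0 := by
  rw [pos_eq_sum_ite, pos_eq_sum_ite, Fin.sum_univ_castSucc]
  simp [Fin.snoc_castSucc, Fin.snoc_last]

lemma pos_of_le {n : ℕ} (s : Fin n → Bool) {k : ℕ} (h : n ≤ k) :
    pos s k = pos s n := by
  rw [pos_eq_sum_ite, pos_eq_sum_ite]
  apply Finset.sum_congr rfl
  intro j _
  have : (j : ℕ) < n := j.isLt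
  simp [this, lt_of_lt_of_le this h]

lemma abs_pos_le {n : ℕ} (s : Fin n → Bool) : |pos s n| ≤ (n : ℤ) := by
  rw [pos]
  calc |∑ j ∈ Finset.univ.filter (fun j : Fin n => (j : ℕ) < n), step (s j)|
      ≤ ∑ j ∈ Finset.univ.filter (fun j : Fin n => (j : ℕ) < n), |step (s j)| :=
        Finset.abs_sum_le_sum_abs _ _
    _ ≤ ∑ j ∈ Finset.univ.filter (fun j : Fin n => (j : ℕ) < n), 1 := by
        apply Finset.sum_le_sum; intro j _; cases s j <;> simp [step]
    _ ≤ (n : ℤ) := by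
        simp only [Finset.sum_const, nsmul_eq_mul, mul_one]
        have := (Finset.card_filter_le Finset.univ (fun j : Fin n => (j : ℕ) < n)).trans (le_of_eq (Finset.card_univ.trans (Fintype.card_fin n)))
        exact_mod_cast this

lemma W_snoc (ε : ℝ) {n : ℕ} (s : Fin n → Bool) (b : Bool) :
    W ε (Fin.snoc s b) = W ε s * (1 / 2 + (pos s n : ℝ) * ε * (step b : ℝ)) := by
  rw [W, Fin.prod_univ_castSucc]
  congr 1
  · apply Finset.prod_congr rfl
    intro k _
    rw [Fin.snoc_castSucc]
    have h1 : ((Fin.castSucc k : Fin (n+1)) : ℕ) = (k : ℕ) := rfl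
    rw [h1, pos_snoc]
    have : ¬ (n < (k : ℕ)) := by omega
    simp [this, W]
  · have h2 : ((Fin.last n : Fin (n+1)) : ℕ) = n := rfl
    rw [Fin.snoc_last, h2, pos_snoc]
    simp

lemma sum_snoc {n : ℕ} (f : (Fin (n+1) → Bool) → ℝ) :
    ∑ s : Fin (n+1) → Bool, f s
      = ∑ s : Fin n → Bool, ∑ b : Bool, f (Fin.snoc s b) := by
  rw [← (Fin.snocEquiv (fun _ => Bool)).sum_comp f]
  rw [Fintype.sum_prod_type]
  rw [Finset.sum_comm]
  rfl

lemma sum_W (ε : ℝ) : ∀ n : ℕ, ∑ s : Fin n → Bool, W ε s = 1 := by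
  intro n
  induction n with
  | zero =>
    rw [Fintype.sum_unique]
    simp [W]
  | succ n ih =>
    rw [sum_snoc (fun s => W ε s)]
    have : ∀ s : Fin n → Bool, ∑ b : Bool, W ε (Fin.snoc s b) = W ε s := by
      intro s
      rw [Fintype.sum_bool, W_snoc, W_snoc]
      simp [step]; ring
    rw [Finset.sum_congr rfl (fun s _ => this s), ih]

lemma P_eq (ε : ℝ) : ∀ (n : ℕ) (x : ℤ),
    P ε n x = ∑ s : Fin n → Bool, if pos s n = x then W ε s else 0 := by
  intro n
  induction n with
  | zero =>
    intro x
    rw [Fintype.sum_unique, P]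
    by_cases h : x = 0 <;> simp [pos, W, h, eq_comm]
  | succ n ih =>
    intro x
    rw [P, ih, ih, sum_snoc]
    rw [Finset.sum_mul, Finset.sum_mul, ← Finset.sum_add_distrib]
    apply Finset.sum_congr rfl
    intro s _
    rw [Fintype.sum_bool, W_snoc, W_snoc]
    have hp : ∀ b : Bool, pos (Fin.snoc s b) (n+1) = pos s n + step b := by
      intro b
      rw [pos_snoc, pos_of_le s (le_of_lt (Nat.lt_succ_self n))]
      simp
    rw [hp, hp]
    simp only [show step true = 1 from rfl, show step false = -1 from rfl]
    by_cases h1 : pos s n = x + 1 <;> by_cases h2 : pos s n = x - 1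
    · omega
    · rw [if_pos h1, if_neg h2, if_neg (by omega : ¬ pos s n + 1 = x),
        if_pos (by omega : pos s n + -1 = x)]
      have e3 : ((pos s n : ℤ) : ℝ) = (x : ℝ) + 1 := by rw [h1]; push_cast; ring
      rw [e3]; ring
    · rw [if_neg h1, if_pos h2, if_pos (by omega : pos s n + 1 = x),
        if_neg (by omega : ¬ pos s n + -1 = x)]
      have e3 : ((pos s n : ℤ) : ℝ) = (x : ℝ) - 1 := by rw [h2]; push_cast; ring
      rw [e3]; ring
    · rw [if_neg h1, if_neg h2, if_neg (by omega : ¬ pos s n + 1 = x),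
        if_neg (by omega : ¬ pos s n + -1 = x)]
      ring

lemma m2_eq_pathsum (ε : ℝ) (n : ℕ) :
    m2 ε n = ∑ s : Fin n → Bool, ((pos s n : ℝ)) ^ 2 * W ε s := by
  rw [m2]
  have hsupp : ∀ x : ℤ, x ∉ Finset.Icc (-(n : ℤ)) (n : ℤ) →
      ((x : ℝ)) ^ 2 * P ε n x = 0 := by
    intro x hx
    have hx' : ¬ |x| ≤ (n : ℤ) := by
      rw [Finset.mem_Icc] at hx
      rcases abs_cases x with ⟨h,_⟩|⟨h,_⟩ <;> omega
    rw [P_eq]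
    have : ∀ s : Fin n → Bool, (if pos s n = x then W ε s else 0) = 0 := by
      intro s
      rw [if_neg]
      intro h
      exact hx' (h ▸ abs_pos_le s)
    rw [Finset.sum_congr rfl (fun s _ => this s)]
    simp
  rw [tsum_eq_sum hsupp]
  have : ∀ x ∈ Finset.Icc (-(n : ℤ)) (n : ℤ), ((x : ℝ)) ^ 2 * P ε n x
      = ∑ s : Fin n → Bool, if pos s n = x then ((x : ℝ)) ^ 2 * W ε s else 0 := by
    intro x _
    rw [P_eq, Finset.mul_sum]
    exact Finset.sum_congr rfl (fun s _ => by rw [mul_ite, mul_zero])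
  rw [Finset.sum_congr rfl this, Finset.sum_comm]
  apply Finset.sum_congr rfl
  intro s _
  have hmem : pos s n ∈ Finset.Icc (-(n : ℤ)) (n : ℤ) := by
    rw [Finset.mem_Icc]
    have := abs_pos_le s
    rcases abs_cases (pos s n) with ⟨h,_⟩|⟨h,_⟩ <;> constructor <;> omega
  have := Finset.sum_ite_eq (Finset.Icc (-(n : ℤ)) (n : ℤ)) (pos s n)
    (fun x => ((x : ℝ)) ^ 2 * W ε s)
  simp only [eq_comm (a := pos s n)] at this ⊢
  rw [this, if_pos hmem]

lemma pathsum_sq (ε : ℝ) : ∀ n : ℕ,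
    ∑ s : Fin n → Bool, ((pos s n : ℝ)) ^ 2 * W ε s
      = ∑ k ∈ Finset.range n, (1 + 4 * ε) ^ k := by
  intro n
  induction n with
  | zero => simp [Fintype.sum_unique, pos]
  | succ n ih =>
    rw [sum_snoc (fun s => ((pos s (n+1) : ℝ)) ^ 2 * W ε s)]
    have key : ∀ s : Fin n → Bool,
        (∑ b : Bool, ((pos (Fin.snoc s b) (n+1) : ℝ)) ^ 2 * W ε (Fin.snoc s b))
          = (1 + 4 * ε) * (((pos s n : ℝ)) ^ 2 * W ε s) + W ε s := by
      intro s
      rw [Fintype.sum_bool, W_snoc, W_snoc]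
      have hp : ∀ b : Bool, pos (Fin.snoc s b) (n+1) = pos s n + step b := by
        intro b
        rw [pos_snoc, pos_of_le s (le_of_lt (Nat.lt_succ_self n))]
        simp
      rw [hp, hp]
      simp only [show step true = 1 from rfl, show step false = -1 from rfl]
      push_cast
      ring
    rw [Finset.sum_congr rfl (fun s _ => key s), Finset.sum_add_distrib,
      ← Finset.mul_sum, ih, sum_W, geom_sum_succ]

lemma m2_closed (ε : ℝ) (n : ℕ) :
    m2 ε n = ∑ k ∈ Finset.range n, (1 + 4 * ε) ^ k := by
  rw [m2_eq_pathsum, pathsum_sq]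

lemma D_pow (ε : ℝ) (j0 : ℕ) : ∀ d : ℕ,
    ∑ s : Fin (j0 + d + 1) → Bool,
        (step (s ⟨j0, by omega⟩) : ℝ) * ((pos s (j0 + d + 1) : ℝ)) * W ε s
      = (1 + 2 * ε) ^ d * (2 * ε * m2 ε j0 + 1) := by
  intro d
  induction d with
  | zero =>
    rw [sum_snoc (fun s : Fin (j0 + 1) → Bool =>
      (step (s ⟨j0, by omega⟩) : ℝ) * ((pos s (j0 + 1) : ℝ)) * W ε s)]
    have key : ∀ s : Fin j0 → Bool,
        (∑ b : Bool, (step ((Fin.snoc s b : Fin (j0 + 1) → Bool) ⟨j0, by omega⟩) : ℝ) *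
            ((pos (Fin.snoc s b) (j0 + 1) : ℝ)) * W ε (Fin.snoc s b))
          = 2 * ε * (((pos s j0 : ℝ)) ^ 2 * W ε s) + W ε s := by
      intro s
      have hlast : (⟨j0, by omega⟩ : Fin (j0 + 1)) = Fin.last j0 := rfl
      have hp : ∀ b : Bool, pos (Fin.snoc s b) (j0 + 1) = pos s j0 + step b := by
        intro b
        rw [pos_snoc, pos_of_le s (le_of_lt (Nat.lt_succ_self j0))]
        simp
      rw [Fintype.sum_bool, hlast, Fin.snoc_last, Fin.snoc_last, W_snoc, W_snoc, hp, hp]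
      simp only [show step true = 1 from rfl, show step false = -1 from rfl]
      push_cast
      ring
    rw [Finset.sum_congr rfl (fun s _ => key s), Finset.sum_add_distrib,
      ← Finset.mul_sum, sum_W, m2_eq_pathsum, pow_zero, one_mul, Finset.mul_sum]
  | succ d ih =>
    show (∑ s : Fin (j0 + d + 1 + 1) → Bool,
        (step (s ⟨j0, by omega⟩) : ℝ) * ((pos s (j0 + d + 1 + 1) : ℝ)) * W ε s) = _
    rw [sum_snoc (fun s : Fin (j0 + d + 1 + 1) → Bool =>
      (step (s ⟨j0, by omega⟩) : ℝ) * ((pos s (j0 + d + 1 + 1) : ℝ)) * W ε s)]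
    have key : ∀ s : Fin (j0 + d + 1) → Bool,
        (∑ b : Bool, (step ((Fin.snoc s b : Fin (j0 + d + 1 + 1) → Bool) ⟨j0, by omega⟩) : ℝ) *
            ((pos (Fin.snoc s b) (j0 + d + 1 + 1) : ℝ)) * W ε (Fin.snoc s b))
          = (1 + 2 * ε) *
              ((step (s ⟨j0, by omega⟩) : ℝ) * ((pos s (j0 + d + 1) : ℝ)) * W ε s) := by
      intro s
      have hcast : (⟨j0, by omega⟩ : Fin (j0 + d + 1 + 1))
          = Fin.castSucc (⟨j0, by omega⟩ : Fin (j0 + d + 1)) := rfl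
      have hp : ∀ b : Bool,
          pos (Fin.snoc s b) (j0 + d + 1 + 1) = pos s (j0 + d + 1) + step b := by
        intro b
        rw [pos_snoc, pos_of_le s (by omega : j0 + d + 1 ≤ j0 + d + 1 + 1)]
        rw [if_pos (by omega : j0 + d + 1 < j0 + d + 1 + 1)]
      rw [Fintype.sum_bool, hcast, Fin.snoc_castSucc, Fin.snoc_castSucc,
        W_snoc, W_snoc, hp, hp]
      simp only [show step true = 1 from rfl, show step false = -1 from rfl]
      push_cast
      ring
    rw [Finset.sum_congr rfl (fun s _ => key s), ← Finset.mul_sum, ih]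
    ring

lemma T_formula (ε : ℝ) (j0 d : ℕ) :
    ∑ s : Fin (j0 + d + 2) → Bool,
        (step (s ⟨j0, by omega⟩) : ℝ) * (step (s ⟨j0 + d + 1, by omega⟩) : ℝ) * W ε s
      = 2 * ε * ((1 + 2 * ε) ^ d * (2 * ε * m2 ε j0 + 1)) := by
  show (∑ s : Fin (j0 + d + 1 + 1) → Bool,
      (step (s ⟨j0, by omega⟩) : ℝ) * (step (s ⟨j0 + d + 1, by omega⟩) : ℝ) * W ε s) = _
  rw [sum_snoc (fun s : Fin (j0 + d + 1 + 1) → Bool =>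
    (step (s ⟨j0, by omega⟩) : ℝ) * (step (s ⟨j0 + d + 1, by omega⟩) : ℝ) * W ε s)]
  have key : ∀ s : Fin (j0 + d + 1) → Bool,
      (∑ b : Bool, (step ((Fin.snoc s b : Fin (j0 + d + 1 + 1) → Bool) ⟨j0, by omega⟩) : ℝ) *
          (step ((Fin.snoc s b : Fin (j0 + d + 1 + 1) → Bool) ⟨j0 + d + 1, by omega⟩) : ℝ) * W ε (Fin.snoc s b))
        = 2 * ε *
            ((step (s ⟨j0, by omega⟩) : ℝ) * ((pos s (j0 + d + 1) : ℝ)) * W ε s) := by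
    intro s
    have hcast : (⟨j0, by omega⟩ : Fin (j0 + d + 1 + 1))
        = Fin.castSucc (⟨j0, by omega⟩ : Fin (j0 + d + 1)) := rfl
    have hlast : (⟨j0 + d + 1, by omega⟩ : Fin (j0 + d + 1 + 1)) = Fin.last _ := rfl
    rw [Fintype.sum_bool, hcast, hlast, Fin.snoc_castSucc, Fin.snoc_castSucc,
      Fin.snoc_last, Fin.snoc_last, W_snoc, W_snoc]
    simp only [show step true = 1 from rfl, show step false = -1 from rfl]
    push_cast
    ring
  rw [Finset.sum_congr rfl (fun s _ => key s), ← Finset.mul_sum, D_pow]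

lemma tendsto_pow_sub (c : ℝ) (L : ℕ) :
    Tendsto (fun N : ℕ => (1 + c / N) ^ (N - L)) atTop (nhds (Real.exp c)) := by
  have h2 : Tendsto (fun N : ℕ => (1 + c / N)) atTop (nhds 1) := by
    simpa using (tendsto_const_div_atTop_nhds_zero_nat c).const_add 1
  have h3 : Tendsto (fun N : ℕ => (1 + c / N) ^ L) atTop (nhds 1) := by
    simpa using h2.pow L
  have h4 : Tendsto (fun N : ℕ => (1 + c / N) ^ N / (1 + c / N) ^ L) atTop
      (nhds (Real.exp c)) := by
    have := (Real.tendsto_one_add_div_pow_exp c).div h3 one_ne_zero; simp at this; exact this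
  apply h4.congr'
  filter_upwards [eventually_gt_atTop (Nat.ceil |c|), eventually_ge_atTop L]
    with N hN1 hN2
  have hNpos : (0 : ℝ) < N := by
    have : 0 < N := lt_of_le_of_lt (Nat.zero_le _) hN1
    exact_mod_cast this
  have hne : (1 : ℝ) + c / N ≠ 0 := by
    have h5 : |c| / N < 1 := by
      rw [div_lt_one hNpos]
      calc |c| ≤ (Nat.ceil |c| : ℝ) := Nat.le_ceil _
        _ < N := by exact_mod_cast hN1
    have h6 : |c / N| < 1 := by
      rwa [abs_div, abs_of_pos hNpos]
    have := abs_lt.mp h6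
    linarith
  rw [pow_sub₀ _ hne hN2, div_eq_mul_inv]


/-- asymptotic auto-correlation under the renormalized coupling
`ε = κ/N`: for fixed `L ≥ 2` and `|κ| < 1/2`,
`lim_{N→∞} N · Σ_s s_{N−L+1} · s_N · W_{κ/N}(s) = 2κ · (1 + 2κ·H(κ))` where
`H(κ) = lim_{N→∞} m₂(N; κ/N)/N` (which exists). The steps `s_{N−L+1}` and `s_N`
are at 0-based indices `N−L` and `N−1`. -/
theorem autocorrelation_asymptotic (L : ℕ) (hL : 2 ≤ L) (κ : ℝ) (hκ : |κ| < 1 / 2) :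
    ∃ H : ℝ,
      Tendsto (fun N : ℕ => m2 (κ / N) N / N) atTop (nhds H) ∧
      Tendsto
        (fun N : ℕ =>
          if h : L < N then
            (N : ℝ) *
              ∑ s : Fin N → Bool,
                (step (s ⟨N - L, by omega⟩) : ℝ) * (step (s ⟨N - 1, by omega⟩) : ℝ) *
                  W (κ / N) s
          else 0)
        atTop (nhds (2 * κ * (1 + 2 * κ * H))) := by
  obtain ⟨d, rfl⟩ : ∃ d, L = d + 2 := ⟨L - 2, by omega⟩
  by_cases hk : κ = 0
  · subst hk
    refine ⟨1, ?_, ?_⟩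
    · apply tendsto_const_nhds.congr'
      filter_upwards [eventually_ge_atTop 1] with N hN
      have hN0 : (N : ℝ) ≠ 0 := by positivity
      rw [m2_closed]
      simp [div_self hN0]
    · have : ∀ᶠ N : ℕ in atTop,
          (0 : ℝ) = (if h : d + 2 < N then
            (N : ℝ) * ∑ s : Fin N → Bool,
              (step (s ⟨N - (d + 2), by omega⟩) : ℝ) * (step (s ⟨N - 1, by omega⟩) : ℝ) *
                W ((0 : ℝ) / N) s
          else 0) := by
        filter_upwards [eventually_gt_atTop (d + 2)] with N hN
        rw [dif_pos hN]
        obtain ⟨j0, rfl⟩ : ∃ j0, N = j0 + d + 2 := ⟨N - (d + 2), by omega⟩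
        have e1 : j0 + d + 2 - (d + 2) = j0 := by omega
        have e2 : j0 + d + 2 - 1 = j0 + d + 1 := by omega
        simp only [e1, e2]
        rw [T_formula ((0:ℝ) / (j0 + d + 2 : ℕ)) j0 d]
        simp
      refine (tendsto_const_nhds.congr' this).congr ?_ |>.mono_right ?_
      · intro N; rfl
      · simp
  · set H : ℝ := (Real.exp (4 * κ) - 1) / (4 * κ) with hH
    have hk4 : (4 : ℝ) * κ ≠ 0 := by
      intro h; apply hk; linarith [h]
    refine ⟨H, ?_, ?_⟩
    · have htail := (Real.tendsto_one_add_div_pow_exp (4 * κ)).sub_const 1 |>.div_const (4 * κ)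
      apply htail.congr'
      filter_upwards [eventually_ge_atTop 1] with N hN
      have hN0 : (N : ℝ) ≠ 0 := by positivity
      rw [m2_closed, geom_sum_eq]
      · rw [show (1:ℝ) + 4 * (κ / N) = 1 + 4 * κ / N from by ring,
          show (1:ℝ) + 4 * κ / N - 1 = 4 * κ / N from by ring, div_div,
          div_mul_cancel₀ _ hN0]
      · intro h
        have h1 : κ / (N:ℝ) = 0 := by linarith
        rcases div_eq_zero_iff.mp h1 with h2 | h2
        · exact hk h2
        · exact hN0 h2
    · -- correlation limit
      have hK : Tendsto (fun N : ℕ => m2 (κ / N) (N - (d + 2)) / N) atTop (nhds H) := by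
        have htail := (tendsto_pow_sub (4 * κ) (d + 2)).sub_const 1 |>.div_const (4 * κ)
        apply htail.congr'
        filter_upwards [eventually_ge_atTop 1] with N hN
        have hN0 : (N : ℝ) ≠ 0 := by positivity
        rw [m2_closed, geom_sum_eq]
        · rw [show (1:ℝ) + 4 * (κ / N) = 1 + 4 * κ / N from by ring,
            show (1:ℝ) + 4 * κ / N - 1 = 4 * κ / N from by ring, div_div,
            div_mul_cancel₀ _ hN0]
        · intro h
          have h1 : κ / (N:ℝ) = 0 := by linarith
          rcases div_eq_zero_iff.mp h1 with h2 | h2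
          · exact hk h2
          · exact hN0 h2
      have hA : Tendsto (fun N : ℕ => (1 + 2 * κ / N) ^ d) atTop (nhds 1) := by
        have h2 : Tendsto (fun N : ℕ => (1 + 2 * κ / N)) atTop (nhds 1) := by
          simpa using (tendsto_const_div_atTop_nhds_zero_nat (2 * κ)).const_add 1
        simpa using h2.pow d
      have hB : Tendsto (fun N : ℕ =>
          2 * κ * (m2 (κ / N) (N - (d + 2)) / N) + 1) atTop (nhds (2 * κ * H + 1)) :=
        (hK.const_mul (2 * κ)).add_const 1
      have hC := ((hA.mul hB).const_mul (2 * κ))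
      have hlim : Tendsto (fun N : ℕ =>
          2 * κ * ((1 + 2 * κ / N) ^ d * (2 * κ * (m2 (κ / N) (N - (d + 2)) / N) + 1)))
          atTop (nhds (2 * κ * (1 + 2 * κ * H))) := by
        convert hC using 2
        ring
      apply hlim.congr'
      filter_upwards [eventually_gt_atTop (d + 2)] with N hN
      rw [dif_pos hN]
      obtain ⟨j0, rfl⟩ : ∃ j0, N = j0 + d + 2 := ⟨N - (d + 2), by omega⟩
      have e1 : j0 + d + 2 - (d + 2) = j0 := by omega
      have e2 : j0 + d + 2 - 1 = j0 + d + 1 := by omega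
      simp only [e1, e2]
      rw [T_formula (κ / (j0 + d + 2 : ℕ)) j0 d]
      have hN0 : ((j0 + d + 2 : ℕ) : ℝ) ≠ 0 := by positivity
      field_simp
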